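/- arXiv:1401.2335 — 3 statements merged into one kernel-verified Lean document; each statement's English description precedes it below -/
import Mathlib

section
/- For all natural numbers m ≤ n, every q in {1, …, 2^n}, and every r with 1 ≤ r < 2^m, there exists p in {1, …, 2^n} with p *_n q = 2^n − r if and only if there exists p' in {1, …, 2^m} with p' *_m q̄ = 2^m − r, where q̄ is the unique element of {1, …, 2^m} congruent to q modulo 2^m. -/
/-- `op` is the Laver table operation on `{1, …, 2^n}`: it maps the set to itself,
satisfies `x * 1 = x + 1` for `x < 2^n`, `2^n * 1 = 1`, and
`x * (y * 1) = (x * y) * (x * 1)`. -/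
def IsLaverOp (n : ℕ) (op : ℕ → ℕ → ℕ) : Prop :=
  (∀ x y, 1 ≤ x → x ≤ 2 ^ n → 1 ≤ y → y ≤ 2 ^ n → 1 ≤ op x y ∧ op x y ≤ 2 ^ n) ∧
  (∀ x, 1 ≤ x → x < 2 ^ n → op x 1 = x + 1) ∧
  (op (2 ^ n) 1 = 1) ∧
  (∀ x y, 1 ≤ x → x ≤ 2 ^ n → 1 ≤ y → y ≤ 2 ^ n → op x (op y 1) = op (op x y) (op x 1))

namespace LaverProof


def pi (N x : ℕ) : ℕ := (x - 1) % 2 ^ N + 1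

lemma two_pow_pos (N : ℕ) : 1 ≤ 2 ^ N := Nat.one_le_two_pow

lemma pi_pos (N x : ℕ) : 1 ≤ pi N x := by unfold pi; omega

lemma pi_le (N x : ℕ) : pi N x ≤ 2 ^ N := by
  have h := Nat.mod_lt (x - 1) (y := 2 ^ N) (by positivity)
  unfold pi; omega

lemma pi_eq {N x : ℕ} (h1 : 1 ≤ x) (h2 : x ≤ 2 ^ N) : pi N x = x := by
  unfold pi; rw [Nat.mod_eq_of_lt (by omega)]; omega

lemma pi_high {N x : ℕ} (h1 : 2 ^ N < x) (h2 : x ≤ 2 ^ (N + 1)) : pi N x = x - 2 ^ N := by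
  unfold pi
  have hp : (2:ℕ) ^ (N + 1) = 2 ^ N + 2 ^ N := by ring
  have h3 : x - 1 - 2 ^ N < 2 ^ N := by omega
  have h4 : x - 1 = (x - 1 - 2 ^ N) + 1 * 2 ^ N := by omega
  rw [h4, Nat.add_mul_mod_self_right, Nat.mod_eq_of_lt h3]; omega

lemma pi_succ {N x : ℕ} (h1 : 1 ≤ x) : pi N (x + 1) = pi N x % 2 ^ N + 1 := by
  unfold pi
  have h2 : x + 1 - 1 = (x - 1) + 1 := by omega
  rw [h2, ← Nat.mod_add_mod]

lemma pi_pi {m n q : ℕ} (hmn : m ≤ n) : pi m (pi n q) = pi m q := by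
  unfold pi
  simp only [Nat.add_sub_cancel]
  rw [Nat.mod_mod_of_dvd _ (pow_dvd_pow 2 hmn)]

def WeakOp (N : ℕ) (op : ℕ → ℕ → ℕ) : Prop :=
  (∀ x y, 1 ≤ x → x ≤ 2 ^ N → 1 ≤ y → y ≤ 2 ^ N → 1 ≤ op x y ∧ op x y ≤ 2 ^ N) ∧
  (∀ x, 1 ≤ x → x < 2 ^ N → op x 1 = x + 1) ∧
  op (2 ^ N) 1 = 1 ∧
  (∀ x y, 1 ≤ x → x ≤ 2 ^ N → 1 ≤ y → y < 2 ^ N → op x (y + 1) = op (op x y) (op x 1))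

lemma WeakOp.rng {N op} (h : WeakOp N op) : ∀ x y, 1 ≤ x → x ≤ 2 ^ N → 1 ≤ y → y ≤ 2 ^ N →
    1 ≤ op x y ∧ op x y ≤ 2 ^ N := h.1
lemma WeakOp.one {N op} (h : WeakOp N op) : ∀ x, 1 ≤ x → x < 2 ^ N → op x 1 = x + 1 := h.2.1
lemma WeakOp.top1 {N op} (h : WeakOp N op) : op (2 ^ N) 1 = 1 := h.2.2.1
lemma WeakOp.sd {N op} (h : WeakOp N op) : ∀ x y, 1 ≤ x → x ≤ 2 ^ N → 1 ≤ y → y < 2 ^ N →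
    op x (y + 1) = op (op x y) (op x 1) := h.2.2.2

lemma isLaver_weak {N op} (h : IsLaverOp N op) : WeakOp N op := by
  obtain ⟨h1, h2, h3, h4⟩ := h
  refine ⟨h1, h2, h3, fun x y hx1 hx2 hy1 hy2 => ?_⟩
  have := h4 x y hx1 hx2 hy1 (le_of_lt hy2)
  rwa [h2 y hy1 hy2] at this

/-- Downward induction from `B`. -/
lemma downInd (B : ℕ) (Q : ℕ → Prop)
    (h : ∀ x, x ≤ B → (∀ x', x < x' → x' ≤ B → Q x') → Q x) :
    ∀ x, x ≤ B → Q x := by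
  have key : ∀ k x, x ≤ B → B - x ≤ k → Q x := by
    intro k
    induction k with
    | zero => intro x hx hk; exact h x hx (fun x' h1 h2 => False.elim (by omega))
    | succ k ih => intro x hx _; exact h x hx (fun x' h1 h2 => ih x' h2 (by omega))
  intro x hx; exact key (B - x) x hx le_rfl

lemma top_row {N op} (h : WeakOp N op) : ∀ y, 1 ≤ y → y ≤ 2 ^ N → op (2 ^ N) y = y := by
  intro y
  induction y with
  | zero => omega
  | succ y ih =>
    intro h1 h2
    rcases Nat.lt_or_ge 0 y with hy | hy
    · rw [h.sd (2 ^ N) y (two_pow_pos N) le_rfl hy (by omega), ih hy (by omega), h.top1,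
        h.one y hy (by omega)]
    · have : y = 0 := by omega
      subst this
      exact h.top1

lemma gt_row {N op} (h : WeakOp N op) :
    ∀ x, x ≤ 2 ^ N → 1 ≤ x → x < 2 ^ N → ∀ y, 1 ≤ y → y ≤ 2 ^ N → x < op x y := by
  refine downInd (2 ^ N) _ ?_
  intro x hxB IH hx1 hxlt y
  induction y with
  | zero => omega
  | succ y ih =>
    intro h1 h2
    rcases Nat.lt_or_ge 0 y with hy | hy
    · have hv := ih hy (by omega)
      have hvr := (h.rng x y hx1 hxB hy (by omega)).2
      rw [h.sd x y hx1 hxB hy (by omega), h.one x hx1 hxlt]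
      rcases Nat.eq_or_lt_of_le hvr with he | hlt
      · rw [he, top_row h (x + 1) (by omega) (by omega)]; omega
      · exact lt_trans hv (IH (op x y) hv hvr (by omega) hlt (x + 1) (by omega) (by omega))
    · have : y = 0 := by omega
      subst this
      rw [h.one x hx1 hxlt]; omega

lemma op_uniq {N op op'} (h : WeakOp N op) (h' : WeakOp N op') :
    ∀ x, x ≤ 2 ^ N → 1 ≤ x → ∀ y, 1 ≤ y → y ≤ 2 ^ N → op x y = op' x y := by
  refine downInd (2 ^ N) _ ?_
  intro x hxB IH hx1 y
  rcases Nat.eq_or_lt_of_le hxB with he | hxlt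
  · subst he
    intro h1 h2
    rw [top_row h y h1 h2, top_row h' y h1 h2]
  · induction y with
    | zero => omega
    | succ y ih =>
      intro h1 h2
      rcases Nat.lt_or_ge 0 y with hy | hy
      · have hv := ih hy (by omega)
        have hgt := gt_row h x hxB hx1 hxlt y hy (by omega)
        have hvr := (h.rng x y hx1 hxB hy (by omega)).2
        rw [h.sd x y hx1 hxB hy (by omega), h'.sd x y hx1 hxB hy (by omega),
          h.one x hx1 hxlt, h'.one x hx1 hxlt, ← hv,
          IH (op x y) hgt hvr (by omega) (x + 1) (by omega) (by omega)]
      · have : y = 0 := by omega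
        subst this
        rw [h.one x hx1 hxlt, h'.one x hx1 hxlt]


def laverRow (T : ℕ → ℕ → ℕ) (x : ℕ) : ℕ → ℕ
  | 0 => 0
  | 1 => x + 1
  | y + 2 => T (laverRow T x (y + 1)) (x + 1)

def laverUp (N : ℕ) : ℕ → ℕ → ℕ → ℕ
  | 0 => fun _ y => y
  | c + 1 => fun x y =>
      if x = 2 ^ N - (c + 1) then laverRow (laverUp N c) x y else laverUp N c x y

def laver (N x y : ℕ) : ℕ := laverUp N (2 ^ N - x) x y

lemma laverUp_top (N : ℕ) : ∀ c y, laverUp N c (2 ^ N) y = y := by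
  intro c
  induction c with
  | zero => intro y; rfl
  | succ c ih =>
    intro y
    have h2 : (1:ℕ) ≤ 2 ^ N := two_pow_pos N
    have : (2:ℕ) ^ N ≠ 2 ^ N - (c + 1) := by omega
    simp only [laverUp, if_neg this]
    exact ih y

lemma laverUp_eq (N : ℕ) : ∀ c x, 1 ≤ x → x < 2 ^ N → 2 ^ N - x ≤ c → ∀ y,
    laverUp N c x y = laverRow (laverUp N (2 ^ N - x - 1)) x y := by
  intro c
  induction c with
  | zero => intro x h1 h2 h3; omega
  | succ c ih =>
    intro x h1 h2 h3 y
    by_cases he : x = 2 ^ N - (c + 1)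
    · have hc : 2 ^ N - x - 1 = c := by omega
      simp only [laverUp, if_pos he, hc]
    · have h3' : 2 ^ N - x ≤ c := by omega
      simp only [laverUp, if_neg he]
      exact ih x h1 h2 h3' y

lemma laver_top (N : ℕ) : ∀ y, laver N (2 ^ N) y = y := by
  intro y
  unfold laver
  rw [Nat.sub_self]
  rfl

lemma laverUp_agree (N : ℕ) : ∀ c x, 1 ≤ x → x ≤ 2 ^ N → 2 ^ N - x ≤ c → ∀ y,
    laverUp N c x y = laver N x y := by
  intro c x h1 h2 h3 y
  rcases Nat.eq_or_lt_of_le h2 with he | hlt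
  · subst he; rw [laverUp_top, laver_top]
  · rw [laverUp_eq N c x h1 hlt h3 y, ← laverUp_eq N (2 ^ N - x) x h1 hlt le_rfl y]
    rfl

lemma laver_unfold (N x : ℕ) (h1 : 1 ≤ x) (h2 : x < 2 ^ N) :
    ∀ y, laver N x y = laverRow (laverUp N (2 ^ N - x - 1)) x y :=
  laverUp_eq N (2 ^ N - x) x h1 h2 le_rfl

lemma laver_one (N x : ℕ) (h1 : 1 ≤ x) (h2 : x < 2 ^ N) : laver N x 1 = x + 1 := by
  rw [laver_unfold N x h1 h2 1]; rfl

lemma laver_bounds (N : ℕ) : ∀ x, x ≤ 2 ^ N → 1 ≤ x → ∀ y, 1 ≤ y → y ≤ 2 ^ N →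
    laver N x y ≤ 2 ^ N ∧ 1 ≤ laver N x y ∧ (x < 2 ^ N → x < laver N x y) := by
  refine downInd (2 ^ N) _ ?_
  intro x hxB IH hx1 y
  rcases Nat.eq_or_lt_of_le hxB with he | hxlt
  · subst he
    intro h1 h2
    rw [laver_top]
    exact ⟨h2, h1, by omega⟩
  · induction y with
    | zero => omega
    | succ y ih =>
      intro h1 h2
      rcases Nat.lt_or_ge 0 y with hy | hy
      · obtain ⟨hv1, hv2, hv3⟩ := ih hy (by omega)
        have hxv := hv3 hxlt
        -- laver N x (y+1) = laver N (laver N x y) (x+1)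
        obtain ⟨k, rfl⟩ : ∃ k, y = k + 1 := ⟨y - 1, by omega⟩
        have step : laver N x (k + 1 + 1) = laver N (laver N x (k + 1)) (x + 1) := by
          rw [laver_unfold N x hx1 hxlt (k + 2)]
          show laverUp N (2 ^ N - x - 1) (laverRow (laverUp N (2 ^ N - x - 1)) x (k + 1)) (x + 1)
            = _
          rw [← laver_unfold N x hx1 hxlt (k + 1)]
          exact laverUp_agree N (2 ^ N - x - 1) (laver N x (k + 1)) (by omega) hv1 (by omega)
            (x + 1)
        rw [step]
        set v := laver N x (k + 1) with hvdef
        rcases Nat.eq_or_lt_of_le hv1 with hev | hltv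
        · rw [hev, laver_top]
          exact ⟨by omega, by omega, by omega⟩
        · obtain ⟨w1, w2, w3⟩ := IH v hxv hv1 (by omega) (x + 1) (by omega) (by omega)
          exact ⟨w1, w2, fun _ => lt_trans hxv (w3 hltv)⟩
      · have : y = 0 := by omega
        subst this
        rw [laver_one N x hx1 hxlt]
        exact ⟨by omega, by omega, by omega⟩

lemma laver_weak (N : ℕ) : WeakOp N (laver N) := by
  refine ⟨?_, fun x h1 h2 => laver_one N x h1 h2, ?_, ?_⟩
  · intro x y hx1 hx2 hy1 hy2
    obtain ⟨a, b, _⟩ := laver_bounds N x hx2 hx1 y hy1 hy2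
    exact ⟨b, a⟩
  · rw [laver_top]
  · intro x y hx1 hx2 hy1 hy2
    rcases Nat.eq_or_lt_of_le hx2 with he | hxlt
    · subst he
      rw [laver_top, laver_top, laver_top, laver_one N y hy1 hy2]
    · rw [laver_one N x hx1 hxlt]
      obtain ⟨hv1, hv2, hv3⟩ := laver_bounds N x hx2 hx1 y hy1 (by omega)
      obtain ⟨k, rfl⟩ : ∃ k, y = k + 1 := ⟨y - 1, by omega⟩
      rw [laver_unfold N x hx1 hxlt (k + 2)]
      show laverUp N (2 ^ N - x - 1) (laverRow (laverUp N (2 ^ N - x - 1)) x (k + 1)) (x + 1) = _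
      rw [← laver_unfold N x hx1 hxlt (k + 1)]
      exact laverUp_agree N (2 ^ N - x - 1) (laver N x (k + 1)) hv2 hv1
        (by have := hv3 hxlt; omega) (x + 1)


lemma succ_pi {N op} (h : WeakOp N op) (x : ℕ) (hx : 1 ≤ x) :
    op (pi N x) 1 = pi N (x + 1) := by
  rcases Nat.eq_or_lt_of_le (pi_le N x) with he | hlt
  · rw [he, h.top1, pi_succ hx, he, Nat.mod_self]
  · rw [h.one (pi N x) (pi_pos N x) hlt, pi_succ hx, Nat.mod_eq_of_lt hlt]

lemma pi_top (N : ℕ) : pi N (2 ^ (N + 1)) = 2 ^ N := by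
  have hp : (2:ℕ) ^ (N + 1) = 2 ^ N + 2 ^ N := by ring
  have h1 : (1:ℕ) ≤ 2 ^ N := two_pow_pos N
  rw [pi_high (by omega) le_rfl]; omega

section Pair

variable {N : ℕ} {op1 op0 : ℕ → ℕ → ℕ}

lemma hom (h1 : WeakOp (N + 1) op1) (h0 : WeakOp N op0)
    (hZ : ∀ x, 1 ≤ x → x ≤ 2 ^ N → op0 x (2 ^ N) = 2 ^ N) :
    ∀ x, x ≤ 2 ^ (N + 1) → 1 ≤ x → ∀ y, 1 ≤ y → y ≤ 2 ^ (N + 1) →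
      op0 (pi N x) (pi N y) = pi N (op1 x y) := by
  refine downInd (2 ^ (N + 1)) _ ?_
  intro x hxB IH hx1 y
  rcases Nat.eq_or_lt_of_le hxB with he | hxlt
  · subst he
    intro hy1 hy2
    rw [top_row h1 y hy1 hy2, pi_top, top_row h0 (pi N y) (pi_pos N y) (pi_le N y)]
  · induction y with
    | zero => omega
    | succ y ih =>
      intro hy1 hy2
      rcases Nat.lt_or_ge 0 y with hy | hy
      · have hu := h1.rng x y hx1 hxB hy (by omega)
        have hgt := gt_row h1 x hxB hx1 hxlt y hy (by omega)
        have hihy := ih hy (by omega)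
        rw [h1.sd x y hx1 hxB hy (by omega), h1.one x hx1 hxlt,
          ← IH (op1 x y) hgt hu.2 hu.1 (x + 1) (by omega) (by omega),
          ← hihy, ← succ_pi h0 x hx1]
        have hay1 := pi_pos N y
        have hax1 := pi_pos N x
        have hax2 := pi_le N x
        have hr1 := h0.rng (pi N x) 1 hax1 hax2 le_rfl (two_pow_pos N)
        rcases Nat.eq_or_lt_of_le (pi_le N y) with ha | ha
        · rw [pi_succ (by omega : 1 ≤ y), ha, Nat.mod_self, hZ (pi N x) hax1 hax2,
            top_row h0 (op0 (pi N x) 1) hr1.1 hr1.2]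
        · rw [pi_succ (by omega : 1 ≤ y), Nat.mod_eq_of_lt ha,
            h0.sd (pi N x) (pi N y) hax1 hax2 hay1 ha]
      · have : y = 0 := by omega
        subst this
        rw [h1.one x hx1 hxlt, pi_eq le_rfl (two_pow_pos N), succ_pi h0 x hx1]

lemma upper (h1 : WeakOp (N + 1) op1) (h0 : WeakOp N op0)
    (hZ : ∀ x, 1 ≤ x → x ≤ 2 ^ N → op0 x (2 ^ N) = 2 ^ N) :
    ∀ x, x ≤ 2 ^ (N + 1) → 2 ^ N ≤ x → x < 2 ^ (N + 1) → ∀ y, 1 ≤ y → y ≤ 2 ^ (N + 1) →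
      op1 x y = op0 (pi N x) (pi N y) + 2 ^ N := by
  refine downInd (2 ^ (N + 1)) _ ?_
  intro x hxB IH hxlo hxhi y
  have hx1 : 1 ≤ x := le_trans (two_pow_pos N) hxlo
  have hax1 := pi_pos N x
  have hax2 := pi_le N x
  have hpx1 : pi N (x + 1) = x + 1 - 2 ^ N := pi_high (by omega) (by omega)
  induction y with
  | zero => omega
  | succ y ih =>
    intro hy1 hy2
    rcases Nat.lt_or_ge 0 y with hy | hy
    · have hv := ih hy (by omega)
      have hay1 := pi_pos N y
      have hvr := h0.rng (pi N x) (pi N y) hax1 hax2 hay1 (pi_le N y)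
      have hgt := gt_row h1 x hxB hx1 hxhi y hy (by omega)
      rw [h1.sd x y hx1 hxB hy (by omega), h1.one x hx1 hxhi, hv]
      rcases Nat.eq_or_lt_of_le (pi_le N y) with ha | ha
      · -- pi N y = 2 ^ N, so op0 ... = 2 ^ N by hZ
        have hv2 : op0 (pi N x) (pi N y) = 2 ^ N := by rw [ha]; exact hZ _ hax1 hax2
        have h2 : (2:ℕ) ^ (N + 1) = 2 ^ N + 2 ^ N := by ring
        rw [hv2, ← h2, top_row h1 (x + 1) (by omega) (by omega),
          pi_succ (by omega : 1 ≤ y), ha, Nat.mod_self]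
        simp only [Nat.zero_add]
        rw [succ_pi h0 x hx1, hpx1]
        omega
      · rw [pi_succ (by omega : 1 ≤ y), Nat.mod_eq_of_lt ha,
          h0.sd (pi N x) (pi N y) hax1 hax2 hay1 ha, succ_pi h0 x hx1, hpx1]
        rcases Nat.eq_or_lt_of_le hvr.2 with hveq | hvlt
        · have h2 : (2:ℕ) ^ (N + 1) = 2 ^ N + 2 ^ N := by ring
          rw [hveq, ← h2, top_row h1 (x + 1) (by omega) (by omega),
            top_row h0 (x + 1 - 2 ^ N) (by omega) (by omega)]
          omega
        · set v := op0 (pi N x) (pi N y) with hvdef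
          have hwgt : x < v + 2 ^ N := by rw [← hv]; exact hgt
          have hw2 : (2:ℕ) ^ (N + 1) = 2 ^ N + 2 ^ N := by ring
          rw [IH (v + 2 ^ N) hwgt (by omega) (by omega) (by omega) (x + 1) (by omega) (by omega),
            pi_high (by omega) (by omega), hpx1]
          congr 2
          omega
    · have : y = 0 := by omega
      subst this
      rw [h1.one x hx1 hxhi, pi_eq le_rfl (two_pow_pos N), succ_pi h0 x hx1, hpx1]
      omega

end Pair


lemma pow_succ_eq (N : ℕ) : (2:ℕ) ^ (N + 1) = 2 ^ N + 2 ^ N := by ring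

lemma last_col : ∀ N op, WeakOp N op → ∀ x, 1 ≤ x → x ≤ 2 ^ N → op x (2 ^ N) = 2 ^ N := by
  intro N
  induction N with
  | zero =>
    intro op h x hx1 hx2
    have hx : x = 1 := by simpa using Nat.le_antisymm (by simpa using hx2) hx1
    subst hx
    simpa using h.top1
  | succ N ihN =>
    intro op h1 x hx1 hx2
    have w0 : WeakOp N (laver N) := laver_weak N
    have hZ0 : ∀ x, 1 ≤ x → x ≤ 2 ^ N → laver N x (2 ^ N) = 2 ^ N := ihN (laver N) w0
    have hps := pow_succ_eq N
    have hp1 := two_pow_pos N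
    rcases Nat.eq_or_lt_of_le hx2 with he | hxlt1
    · subst he; exact top_row h1 (2 ^ (N + 1)) (by omega) le_rfl
    rcases le_or_gt (2 ^ N) x with hxhi | hxlo
    · -- upper half row
      rw [upper h1 w0 hZ0 x hx2 hxhi hxlt1 (2 ^ (N + 1)) (by omega) le_rfl, pi_top,
        hZ0 (pi N x) (pi_pos N x) (pi_le N x)]
      omega
    · -- lower half row: period argument
      have hx2N : x ≤ 2 ^ N := le_of_lt hxlo
      have hex : ∃ k, laver N x (k + 1) = 2 ^ N := by
        refine ⟨2 ^ N - 1, ?_⟩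
        have : 2 ^ N - 1 + 1 = 2 ^ N := by omega
        rw [this]
        exact hZ0 x hx1 hx2N
      set k0 := Nat.find hex with hk0
      set p0 := k0 + 1 with hp0def
      have hp0 : laver N x p0 = 2 ^ N := Nat.find_spec hex
      have hp0le : p0 ≤ 2 ^ N := by
        have := Nat.find_min' hex (m := 2 ^ N - 1) (by
          have e : 2 ^ N - 1 + 1 = 2 ^ N := by omega
          rw [e]; exact hZ0 x hx1 hx2N)
        omega
      have hp0min : ∀ j, 1 ≤ j → j < p0 → laver N x j ≠ 2 ^ N := by
        intro j hj1 hj2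
        have := Nat.find_min hex (m := j - 1) (by omega)
        have e : j - 1 + 1 = j := by omega
        rwa [e] at this
      have hp0pos : 1 ≤ p0 := by omega
      -- periodicity at level N
      have per0 : ∀ k, 1 ≤ k → k + p0 ≤ 2 ^ N → laver N x (p0 + k) = laver N x k := by
        intro k
        induction k with
        | zero => omega
        | succ k ihk =>
          intro hk1 hk2
          rcases Nat.lt_or_ge 0 k with hk | hk
          · have e : p0 + (k + 1) = (p0 + k) + 1 := by ring
            rw [e, w0.sd x (p0 + k) hx1 hx2N (by omega) (by omega),
              ihk (by omega) (by omega), ← w0.sd x k hx1 hx2N (by omega) (by omega)]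
          · have e : k = 0 := by omega
            subst e
            rw [w0.sd x p0 hx1 hx2N hp0pos (by omega), hp0,
              top_row w0 (laver N x 1) (by
                have := w0.rng x 1 hx1 hx2N le_rfl hp1; omega) (by
                have := w0.rng x 1 hx1 hx2N le_rfl hp1; omega)]
      have shift0 : ∀ t y, 1 ≤ y → y + t * p0 ≤ 2 ^ N → laver N x (y + t * p0) = laver N x y := by
        intro t
        induction t with
        | zero => intro y h1y h2y; simp
        | succ t iht =>
          intro y h1y h2y
          have e : y + (t + 1) * p0 = p0 + (y + t * p0) := by ring
          rw [e, per0 (y + t * p0) (by omega) (by omega), iht y h1y (by omega)]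
      have hdvd : p0 ∣ 2 ^ N := by
        rcases Nat.eq_or_lt_of_le (Nat.zero_le (2 ^ N % p0)) with hrem | hrem
        · exact Nat.dvd_of_mod_eq_zero hrem.symm
        · exfalso
          have hdm := Nat.div_add_mod (2 ^ N) p0
          have hremlt : 2 ^ N % p0 < p0 := Nat.mod_lt _ (by omega)
          have e : 2 ^ N = 2 ^ N % p0 + (2 ^ N / p0) * p0 := by
            rw [Nat.mul_comm (2 ^ N / p0) p0]; omega
          have := shift0 (2 ^ N / p0) (2 ^ N % p0) (by omega) (by omega)
          rw [← e] at this
          rw [hZ0 x hx1 hx2N] at this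
          exact hp0min (2 ^ N % p0) (by omega) (by omega) this.symm
      -- lift to level N+1
      have hx2S : x ≤ 2 ^ (N + 1) := by omega
      have hxltS : x < 2 ^ (N + 1) := by omega
      set q0 := op x p0 with hq0def
      have hq0rng := h1.rng x p0 hx1 hx2S hp0pos (by omega)
      have hq0pi : pi N q0 = 2 ^ N := by
        have := hom h1 w0 hZ0 x hx2S hx1 p0 hp0pos (by omega)
        rw [pi_eq hx1 hx2N, pi_eq hp0pos hp0le] at this
        rw [← this, hp0]
      have hq0cases : q0 = 2 ^ N ∨ q0 = 2 ^ (N + 1) := by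
        rcases le_or_gt q0 (2 ^ N) with hc | hc
        · left; rw [pi_eq hq0rng.1 hc] at hq0pi; omega
        · right; rw [pi_high hc hq0rng.2] at hq0pi; omega
      -- produce a "full period" P with op x P = 2^(N+1) and P ∣ 2^(N+1)
      have hP : ∃ P, 1 ≤ P ∧ P ≤ 2 ^ (N + 1) ∧ op x P = 2 ^ (N + 1) ∧ P ∣ 2 ^ (N + 1) := by
        rcases hq0cases with hq | hq
        · -- q0 = 2^N : double period
          have lift : ∀ k, 1 ≤ k → k ≤ p0 → op x (p0 + k) = laver N x k + 2 ^ N := by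
            intro k
            induction k with
            | zero => omega
            | succ k ihk =>
              intro hk1 hk2
              rcases Nat.lt_or_ge 0 k with hk | hk
              · have e : p0 + (k + 1) = (p0 + k) + 1 := by ring
                have hv := w0.rng x k hx1 hx2N (by omega) (by omega)
                have hvne : laver N x k ≠ 2 ^ N := hp0min k (by omega) (by omega)
                rw [e, h1.sd x (p0 + k) hx1 hx2S (by omega) (by omega),
                  ihk (by omega) (by omega), h1.one x hx1 hxltS,
                  upper h1 w0 hZ0 (laver N x k + 2 ^ N) (by omega) (by omega) (by omega)
                    (x + 1) (by omega) (by omega),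
                  pi_high (by omega) (by omega), pi_eq (by omega) (by omega : x + 1 ≤ 2 ^ N)]
                have e2 : laver N x k + 2 ^ N - 2 ^ N = laver N x k := by omega
                rw [e2, ← w0.one x hx1 hxlo, ← w0.sd x k hx1 hx2N (by omega) (by omega)]
              · have e : k = 0 := by omega
                subst e
                rw [h1.sd x p0 hx1 hx2S hp0pos (by omega), ← hq0def, hq, h1.one x hx1 hxltS,
                  upper h1 w0 hZ0 (2 ^ N) (by omega) le_rfl (by omega) (x + 1) (by omega)
                    (by omega),
                  pi_eq hp1 le_rfl, pi_eq (by omega) (by omega : x + 1 ≤ 2 ^ N),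
                  top_row w0 (x + 1) (by omega) (by omega), laver_one N x hx1 hxlo]
          refine ⟨2 * p0, by omega, by omega, ?_, ?_⟩
          · have e : 2 * p0 = p0 + p0 := by ring
            rw [e, lift p0 hp0pos le_rfl, hp0]
            omega
          · obtain ⟨c, hc⟩ := hdvd
            exact ⟨c, by rw [pow_succ_eq N, hc]; ring⟩
        · -- q0 = 2^(N+1) : same period
          exact ⟨p0, hp0pos, by omega, by rw [← hq0def, hq],
            dvd_trans hdvd ⟨2, by rw [pow_succ_eq N]; ring⟩⟩
      obtain ⟨P, hP1, hP2, hP3, hP4⟩ := hP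
      have per1 : ∀ k, 1 ≤ k → k + P ≤ 2 ^ (N + 1) → op x (P + k) = op x k := by
        intro k
        induction k with
        | zero => omega
        | succ k ihk =>
          intro hk1 hk2
          rcases Nat.lt_or_ge 0 k with hk | hk
          · have e : P + (k + 1) = (P + k) + 1 := by ring
            rw [e, h1.sd x (P + k) hx1 hx2S (by omega) (by omega),
              ihk (by omega) (by omega), ← h1.sd x k hx1 hx2S (by omega) (by omega)]
          · have e : k = 0 := by omega
            subst e
            rw [h1.sd x P hx1 hx2S hP1 (by omega), hP3,
              top_row h1 (op x 1) (by
                have := h1.rng x 1 hx1 hx2S le_rfl (by omega); omega) (by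
                have := h1.rng x 1 hx1 hx2S le_rfl (by omega); omega)]
      have mult1 : ∀ t, 1 ≤ t → t * P ≤ 2 ^ (N + 1) → op x (t * P) = 2 ^ (N + 1) := by
        intro t
        induction t with
        | zero => omega
        | succ t iht =>
          intro ht1 ht2
          rcases Nat.lt_or_ge 0 t with ht | ht
          · have e : (t + 1) * P = P + t * P := by ring
            have hP1t : 1 ≤ t * P := Nat.mul_pos ht hP1
            rw [e, per1 (t * P) hP1t (by omega), iht (by omega) (by omega)]
          · have e : t = 0 := by omega
            subst e
            have e2 : (0 + 1) * P = P := by ring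
            rw [e2, hP3]
      obtain ⟨c, hc⟩ := hP4
      have hc1 : 1 ≤ c := by
        rcases Nat.eq_zero_or_pos c with h0 | h0
        · exfalso; rw [h0, Nat.mul_zero] at hc; omega
        · omega
      have e2 : c * P = 2 ^ (N + 1) := by rw [hc]; ring
      have hm := mult1 c hc1 (le_of_eq e2)
      rw [e2] at hm
      exact hm

lemma step_iff {N : ℕ} {op1 : ℕ → ℕ → ℕ} (h1 : WeakOp (N + 1) op1)
    (q r : ℕ) (hq1 : 1 ≤ q) (hq2 : q ≤ 2 ^ (N + 1)) (hr1 : 1 ≤ r) (hr2 : r < 2 ^ N) :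
    (∃ p, 1 ≤ p ∧ p ≤ 2 ^ (N + 1) ∧ op1 p q = 2 ^ (N + 1) - r) ↔
      (∃ p', 1 ≤ p' ∧ p' ≤ 2 ^ N ∧ laver N p' (pi N q) = 2 ^ N - r) := by
  have w0 := laver_weak N
  have hZ0 := last_col N (laver N) w0
  have hps := pow_succ_eq N
  have hp1 := two_pow_pos N
  constructor
  · rintro ⟨p, hp1', hp2, hp3⟩
    refine ⟨pi N p, pi_pos N p, pi_le N p, ?_⟩
    rw [hom h1 w0 hZ0 p hp2 hp1' q hq1 hq2, hp3, pi_high (by omega) (by omega)]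
    omega
  · rintro ⟨p', h1', h2', h3'⟩
    rcases Nat.eq_or_lt_of_le h2' with he | hlt
    · refine ⟨2 ^ N, by omega, by omega, ?_⟩
      rw [upper h1 w0 hZ0 (2 ^ N) (by omega) le_rfl (by omega) q hq1 hq2,
        pi_eq hp1 le_rfl, laver_top]
      subst he
      rw [laver_top] at h3'
      omega
    · refine ⟨2 ^ N + p', by omega, by omega, ?_⟩
      have hpi : pi N (2 ^ N + p') = p' := by
        rw [pi_high (by omega) (by omega)]; omega
      rw [upper h1 w0 hZ0 (2 ^ N + p') (by omega) (by omega) (by omega) q hq1 hq2, hpi, h3']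
      omega

lemma main (m : ℕ) (opm : ℕ → ℕ → ℕ) (hypm : WeakOp m opm) (r : ℕ)
    (hr1 : 1 ≤ r) (hr2 : r < 2 ^ m) :
    ∀ n, m ≤ n → ∀ op, WeakOp n op → ∀ q, 1 ≤ q → q ≤ 2 ^ n →
    ((∃ p, 1 ≤ p ∧ p ≤ 2 ^ n ∧ op p q = 2 ^ n - r) ↔
     (∃ p', 1 ≤ p' ∧ p' ≤ 2 ^ m ∧ opm p' (pi m q) = 2 ^ m - r)) := by
  intro n hmn
  induction n, hmn using Nat.le_induction with
  | base =>
    intro op h q hq1 hq2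
    rw [pi_eq hq1 hq2]
    constructor
    · rintro ⟨p, a, b, c⟩
      exact ⟨p, a, b, by rw [← op_uniq h hypm p b a q hq1 hq2]; exact c⟩
    · rintro ⟨p, a, b, c⟩
      exact ⟨p, a, b, by rw [op_uniq h hypm p b a q hq1 hq2]; exact c⟩
  | succ k hk ih =>
    intro op h q hq1 hq2
    have hrk : r < 2 ^ k := lt_of_lt_of_le hr2 (Nat.pow_le_pow_right (by norm_num) hk)
    rw [step_iff h q r hq1 hq2 hr1 hrk,
      ih (laver k) (laver_weak k) (pi k q) (pi_pos k q) (pi_le k q), pi_pi hk]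


end LaverProof

/-- Occurrence of values `2^n − r` in columns is governed by `A_m`: for `m ≤ n`,
`2^n − r` appears in the `q`-th column of `A_n` iff `2^m − r` appears in the
`q̄`-th column of `A_m`, where `q̄ = (q − 1) % 2^m + 1`. -/
theorem laver_column_occurrence (m n : ℕ) (hmn : m ≤ n)
    (opn opm : ℕ → ℕ → ℕ) (hopn : IsLaverOp n opn) (hopm : IsLaverOp m opm)
    (q : ℕ) (hq1 : 1 ≤ q) (hq2 : q ≤ 2 ^ n)
    (r : ℕ) (hr1 : 1 ≤ r) (hr2 : r < 2 ^ m) :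
    (∃ p, 1 ≤ p ∧ p ≤ 2 ^ n ∧ opn p q = 2 ^ n - r) ↔
      (∃ p', 1 ≤ p' ∧ p' ≤ 2 ^ m ∧ opm p' ((q - 1) % 2 ^ m + 1) = 2 ^ m - r) := by
  exact LaverProof.main m opm (LaverProof.isLaver_weak hopm) r hr1 hr2 n hmn opn
    (LaverProof.isLaver_weak hopn) q hq1 hq2
end

section
/- For every n ≥ 0, every q in {1, …, 2^n}, and all x, y in {1, …, 2^n}, the sum ψ_{q,n}(x, y) = Σ_{r : r ⊑_n q} φ_{r,n}(x, y) equals 1 if q belongs to Col_n(y) but not to Col_n(x *_n y), and equals 0 otherwise. -/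
/-- The coboundary `φ_{q,n}(x, y) = δ_{y,q} − δ_{x *_n y, q}`. -/
def laverPhi (op : ℕ → ℕ → ℕ) (q x y : ℕ) : ℤ :=
  (if y = q then 1 else 0) - (if op x y = q then 1 else 0)

namespace LaverAux

variable {n : ℕ} {op : ℕ → ℕ → ℕ}

lemma one_le_T : 1 ≤ 2 ^ n := Nat.one_le_two_pow

/-- The row of `2^n` is the identity. -/
lemma id_row (h : IsLaverOp n op) :
    ∀ y, 1 ≤ y → y ≤ 2 ^ n → op (2 ^ n) y = y := by
  intro y
  induction y using Nat.strong_induction_on with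
  | _ y ih =>
    intro hy1 hy2
    rcases eq_or_lt_of_le hy1 with h1 | h1
    · rw [← h1]
      exact h.2.2.1
    · have hy'1 : 1 ≤ y - 1 := by omega
      have hy'2 : y - 1 ≤ 2 ^ n := by omega
      have hsucc : op (y - 1) 1 = y := by
        rw [h.2.1 (y - 1) hy'1 (by omega)]; omega
      have key := h.2.2.2 (2 ^ n) (y - 1) one_le_T le_rfl hy'1 hy'2
      rw [hsucc, h.2.2.1, ih (y - 1) (by omega) hy'1 hy'2, hsucc] at key
      exact key

/-- Every entry of row `x < 2^n` exceeds `x`. -/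
lemma row_gt (h : IsLaverOp n op) :
    ∀ x, 1 ≤ x → x < 2 ^ n → ∀ y, 1 ≤ y → y ≤ 2 ^ n → x < op x y := by
  suffices H : ∀ d x, 2 ^ n - x ≤ d → 1 ≤ x → x < 2 ^ n →
      ∀ y, 1 ≤ y → y ≤ 2 ^ n → x < op x y by
    intro x hx1 hx2
    exact H (2 ^ n - x) x le_rfl hx1 hx2
  intro d
  induction d using Nat.strong_induction_on with
  | _ d ihd =>
    intro x hxd hx1 hx2 y
    induction y using Nat.strong_induction_on with
    | _ y ihy =>
      intro hy1 hy2
      rcases eq_or_lt_of_le hy1 with h1 | h1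
      · rw [← h1, h.2.1 x hx1 hx2]
        omega
      · have hy'1 : 1 ≤ y - 1 := by omega
        have hy'2 : y - 1 ≤ 2 ^ n := by omega
        have hsucc : op (y - 1) 1 = y := by
          rw [h.2.1 (y - 1) hy'1 (by omega)]; omega
        have key := h.2.2.2 x (y - 1) hx1 (le_of_lt hx2) hy'1 hy'2
        rw [hsucc, h.2.1 x hx1 hx2] at key
        have hcgt : x < op x (y - 1) := ihy (y - 1) (by omega) hy'1 hy'2
        have hcr := h.1 x (y - 1) hx1 (le_of_lt hx2) hy'1 hy'2
        rcases eq_or_lt_of_le hcr.2 with hcT | hcT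
        · rw [key, hcT, id_row h (x + 1) (by omega) (by omega)]
          omega
        · have hlt := ihd (2 ^ n - op x (y - 1)) (by omega) (op x (y - 1)) le_rfl hcr.1 hcT
            (x + 1) (by omega) (by omega)
          omega

/-- The last column is constant equal to `2^n`. -/
lemma top_col (h : IsLaverOp n op) (x : ℕ) (hx1 : 1 ≤ x) (hx2 : x ≤ 2 ^ n) :
    op x (2 ^ n) = 2 ^ n := by
  rcases eq_or_lt_of_le hx2 with hxT | hxT
  · rw [hxT]
    exact id_row h (2 ^ n) one_le_T le_rfl
  · have key := h.2.2.2 x (2 ^ n) hx1 (le_of_lt hxT) one_le_T le_rfl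
    rw [h.2.2.1, h.2.1 x hx1 hxT] at key
    have hmr := h.1 x (2 ^ n) hx1 (le_of_lt hxT) one_le_T le_rfl
    have hmgt : x < op x (2 ^ n) := row_gt h x hx1 hxT (2 ^ n) one_le_T le_rfl
    rcases eq_or_lt_of_le hmr.2 with hmT | hmT
    · exact hmT
    · exfalso
      have hlt := row_gt h (op x (2 ^ n)) hmr.1 hmT (x + 1) (by omega) (by omega)
      omega

/-- Left self-distributivity. -/
lemma ld (h : IsLaverOp n op) :
    ∀ x, 1 ≤ x → x ≤ 2 ^ n → ∀ y, 1 ≤ y → y ≤ 2 ^ n → ∀ z, 1 ≤ z → z ≤ 2 ^ n →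
      op x (op y z) = op (op x y) (op x z) := by
  suffices H : ∀ dx x, 2 ^ n - x ≤ dx → 1 ≤ x → x ≤ 2 ^ n →
      ∀ dy y, 2 ^ n - y ≤ dy → 1 ≤ y → y ≤ 2 ^ n →
      ∀ z, 1 ≤ z → z ≤ 2 ^ n → op x (op y z) = op (op x y) (op x z) by
    intro x hx1 hx2 y hy1 hy2 z hz1 hz2
    exact H _ x le_rfl hx1 hx2 _ y le_rfl hy1 hy2 z hz1 hz2
  intro dx
  induction dx using Nat.strong_induction_on with
  | _ dx ihx =>
  intro x hxd hx1 hx2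
  rcases eq_or_lt_of_le hx2 with hxT | hxT
  · intro dy y _ hy1 hy2 z hz1 hz2
    have hyz := h.1 y z hy1 hy2 hz1 hz2
    rw [hxT, id_row h (op y z) hyz.1 hyz.2, id_row h y hy1 hy2, id_row h z hz1 hz2]
  · intro dy
    induction dy using Nat.strong_induction_on with
    | _ dy ihy =>
    intro y hyd hy1 hy2
    rcases eq_or_lt_of_le hy2 with hyT | hyT
    · intro z hz1 hz2
      have hxz := h.1 x z hx1 hx2 hz1 hz2
      rw [hyT, id_row h z hz1 hz2, top_col h x hx1 hx2, id_row h (op x z) hxz.1 hxz.2]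
    · intro z
      induction z using Nat.strong_induction_on with
      | _ z ihz =>
      intro hz1 hz2
      rcases eq_or_lt_of_le hz1 with hz1' | hz1'
      · rw [← hz1']
        exact h.2.2.2 x y hx1 hx2 hy1 hy2
      · have hz'1 : 1 ≤ z - 1 := by omega
        have hz'2 : z - 1 ≤ 2 ^ n := by omega
        have hzsucc : op (z - 1) 1 = z := by
          rw [h.2.1 (z - 1) hz'1 (by omega)]; omega
        have ha := h.1 x y hx1 hx2 hy1 hy2
        have hagt : x < op x y := row_gt h x hx1 hxT y hy1 hy2
        have hu := h.1 x (z - 1) hx1 hx2 hz'1 hz'2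
        have hv := h.1 x 1 hx1 hx2 le_rfl one_le_T
        have hc := h.1 y (z - 1) hy1 hy2 hz'1 hz'2
        have hcgt : y < op y (z - 1) := row_gt h y hy1 hyT (z - 1) hz'1 hz'2
        have hyz : op y z = op (op y (z - 1)) (op y 1) := by
          have := h.2.2.2 y (z - 1) hy1 hy2 hz'1 hz'2
          rwa [hzsucc] at this
        have hxz : op x z = op (op x (z - 1)) (op x 1) := by
          have := h.2.2.2 x (z - 1) hx1 hx2 hz'1 hz'2
          rwa [hzsucc] at this
        have hIHz : op x (op y (z - 1)) = op (op x y) (op x (z - 1)) :=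
          ihz (z - 1) (by omega) hz'1 hz'2
        have hax : op x (op y 1) = op (op x y) (op x 1) := h.2.2.2 x y hx1 hx2 hy1 hy2
        have hy1r := h.1 y 1 hy1 hy2 le_rfl one_le_T
        have hld_a : ∀ b, 1 ≤ b → b ≤ 2 ^ n → ∀ cc, 1 ≤ cc → cc ≤ 2 ^ n →
            op (op x y) (op b cc) = op (op (op x y) b) (op (op x y) cc) := by
          intro b hb1 hb2 cc hc1 hc2
          exact ihx (2 ^ n - op x y) (by omega) (op x y) le_rfl ha.1 ha.2
            (2 ^ n - b) b le_rfl hb1 hb2 cc hc1 hc2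
        rcases eq_or_lt_of_le hc.2 with hcT | hcT
        · have hyzv : op y z = op y 1 := by
            rw [hyz, hcT, id_row h (op y 1) hy1r.1 hy1r.2]
          have hTop : op (op x y) (op x (z - 1)) = 2 ^ n := by
            rw [← hIHz, hcT, top_col h x hx1 hx2]
          have hav := h.1 (op x y) (op x 1) ha.1 ha.2 hv.1 hv.2
          calc op x (op y z) = op x (op y 1) := by rw [hyzv]
            _ = op (op x y) (op x 1) := hax
            _ = op (2 ^ n) (op (op x y) (op x 1)) := by
                  rw [id_row h (op (op x y) (op x 1)) hav.1 hav.2]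
            _ = op (op (op x y) (op x (z - 1))) (op (op x y) (op x 1)) := by rw [hTop]
            _ = op (op x y) (op (op x (z - 1)) (op x 1)) :=
                  (hld_a _ hu.1 hu.2 _ hv.1 hv.2).symm
            _ = op (op x y) (op x z) := by rw [← hxz]
        · have hIHy : op x (op (op y (z - 1)) (op y 1)) =
              op (op x (op y (z - 1))) (op x (op y 1)) :=
            ihy (2 ^ n - op y (z - 1)) (by omega) (op y (z - 1)) le_rfl hc.1 hc.2
              (op y 1) hy1r.1 hy1r.2
          calc op x (op y z) = op x (op (op y (z - 1)) (op y 1)) := by rw [← hyz]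
            _ = op (op x (op y (z - 1))) (op x (op y 1)) := hIHy
            _ = op (op (op x y) (op x (z - 1))) (op (op x y) (op x 1)) := by
                  rw [hIHz, hax]
            _ = op (op x y) (op (op x (z - 1)) (op x 1)) :=
                  (hld_a _ hu.1 hu.2 _ hv.1 hv.2).symm
            _ = op (op x y) (op x z) := by rw [← hxz]

/-- Columns are closed under left translations. -/
lemma col_closed (h : IsLaverOp n op) :
    ∀ p, 1 ≤ p → p ≤ 2 ^ n → ∀ y, 1 ≤ y → y ≤ 2 ^ n →
      ∀ u, 1 ≤ u → u ≤ 2 ^ n →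
      ∃ w, 1 ≤ w ∧ w ≤ 2 ^ n ∧ op w y = op p (op u y) := by
  suffices H : ∀ d p, 2 ^ n - p ≤ d → 1 ≤ p → p ≤ 2 ^ n → ∀ y, 1 ≤ y → y ≤ 2 ^ n →
      ∀ u, 1 ≤ u → u ≤ 2 ^ n → ∃ w, 1 ≤ w ∧ w ≤ 2 ^ n ∧ op w y = op p (op u y) by
    intro p hp1 hp2
    exact H _ p le_rfl hp1 hp2
  intro d
  induction d using Nat.strong_induction_on with
  | _ d ihd =>
    intro p hpd hp1 hp2 y hy1 hy2 u hu1 hu2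
    have huy := h.1 u y hu1 hu2 hy1 hy2
    rcases eq_or_lt_of_le hp2 with hpT | hpT
    · exact ⟨u, hu1, hu2, by rw [hpT, id_row h (op u y) huy.1 huy.2]⟩
    · have hpu := h.1 p u hp1 hp2 hu1 hu2
      have hpugt : p < op p u := row_gt h p hp1 hpT u hu1 hu2
      obtain ⟨w, hw1, hw2, hwe⟩ := ihd (2 ^ n - op p u) (by omega) (op p u) le_rfl
        hpu.1 hpu.2 y hy1 hy2 p hp1 hp2
      refine ⟨w, hw1, hw2, ?_⟩
      rw [hwe, ← ld h p hp1 hp2 u hu1 hu2 y hy1 hy2]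

end LaverAux

open Classical in
/-- The cocycle `ψ_{q,n} = Σ_{r ⊑_n q} φ_{r,n}` takes the value `1` on `(x, y)` when
`q` belongs to the column of `y` but not to the column of `x *_n y`, and `0` otherwise. -/
theorem laver_psi_values (n : ℕ) (op : ℕ → ℕ → ℕ) (h : IsLaverOp n op)
    (q x y : ℕ) (hq1 : 1 ≤ q) (hq2 : q ≤ 2 ^ n)
    (hx1 : 1 ≤ x) (hx2 : x ≤ 2 ^ n) (hy1 : 1 ≤ y) (hy2 : y ≤ 2 ^ n) :
    (∑ r ∈ Finset.Icc 1 (2 ^ n),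
        if ∃ p, 1 ≤ p ∧ p ≤ 2 ^ n ∧ op p r = q then laverPhi op r x y else 0) =
      if (∃ p, 1 ≤ p ∧ p ≤ 2 ^ n ∧ op p y = q) ∧
          ¬ (∃ p, 1 ≤ p ∧ p ≤ 2 ^ n ∧ op p (op x y) = q) then 1 else 0 := by
  classical
  have hxy := h.1 x y hx1 hx2 hy1 hy2
  -- the key implication: q ∈ Col(x*y) → q ∈ Col(y)
  have hBA : (∃ p, 1 ≤ p ∧ p ≤ 2 ^ n ∧ op p (op x y) = q) →
      (∃ p, 1 ≤ p ∧ p ≤ 2 ^ n ∧ op p y = q) := by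
    rintro ⟨p, hp1, hp2, hpe⟩
    obtain ⟨w, hw1, hw2, hwe⟩ := LaverAux.col_closed h p hp1 hp2 y hy1 hy2 x hx1 hx2
    exact ⟨w, hw1, hw2, by rw [hwe, hpe]⟩
  have hstep : ∀ r ∈ Finset.Icc 1 (2 ^ n),
      (if ∃ p, 1 ≤ p ∧ p ≤ 2 ^ n ∧ op p r = q then laverPhi op r x y else 0) =
        ((if r = y then (if ∃ p, 1 ≤ p ∧ p ≤ 2 ^ n ∧ op p y = q then (1 : ℤ) else 0) else 0)
          - (if r = op x y then
              (if ∃ p, 1 ≤ p ∧ p ≤ 2 ^ n ∧ op p (op x y) = q then (1 : ℤ) else 0) else 0)) := by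
    intro r _
    simp only [laverPhi]
    by_cases h1 : r = y
    · rw [h1, if_pos rfl]
      by_cases h2 : y = op x y
      · rw [if_pos h2, ← h2]
        simp
      · have h2' : op x y ≠ y := fun e => h2 e.symm
        rw [if_neg h2]
        simp [h2']
    · rw [if_neg h1]
      by_cases h2 : r = op x y
      · have hne : y ≠ op x y := fun e => h1 (h2.trans e.symm)
        rw [h2, if_pos rfl]
        by_cases hp : ∃ p, 1 ≤ p ∧ p ≤ 2 ^ n ∧ op p (op x y) = q <;> simp [hp, hne]
      · have h1' : y ≠ r := fun e => h1 e.symm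
        have h2' : op x y ≠ r := fun e => h2 e.symm
        rw [if_neg h2]
        simp [h1', h2']
  rw [Finset.sum_congr rfl hstep, Finset.sum_sub_distrib]
  have hyIcc : y ∈ Finset.Icc 1 (2 ^ n) := Finset.mem_Icc.mpr ⟨hy1, hy2⟩
  have hxyIcc : op x y ∈ Finset.Icc 1 (2 ^ n) := Finset.mem_Icc.mpr ⟨hxy.1, hxy.2⟩
  have e1 : (∑ r ∈ Finset.Icc 1 (2 ^ n),
      if r = y then (if ∃ p, 1 ≤ p ∧ p ≤ 2 ^ n ∧ op p y = q then (1 : ℤ) else 0) else 0)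
      = (if ∃ p, 1 ≤ p ∧ p ≤ 2 ^ n ∧ op p y = q then (1 : ℤ) else 0) := by
    rw [Finset.sum_eq_single_of_mem y hyIcc (fun b _ hb => if_neg hb), if_pos rfl]
  have e2 : (∑ r ∈ Finset.Icc 1 (2 ^ n),
      if r = op x y then
        (if ∃ p, 1 ≤ p ∧ p ≤ 2 ^ n ∧ op p (op x y) = q then (1 : ℤ) else 0) else 0)
      = (if ∃ p, 1 ≤ p ∧ p ≤ 2 ^ n ∧ op p (op x y) = q then (1 : ℤ) else 0) := by
    rw [Finset.sum_eq_single_of_mem (op x y) hxyIcc (fun b _ hb => if_neg hb), if_pos rfl]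
  rw [e1, e2]
  by_cases hA : ∃ p, 1 ≤ p ∧ p ≤ 2 ^ n ∧ op p y = q
  · by_cases hB : ∃ p, 1 ≤ p ∧ p ≤ 2 ^ n ∧ op p (op x y) = q
    · simp [hA, hB]
    · simp [hA, hB]
  · by_cases hB : ∃ p, 1 ≤ p ∧ p ≤ 2 ^ n ∧ op p (op x y) = q
    · exact absurd (hBA hB) hA
    · simp [hA, hB]
end

section
/- For every n ≥ 1, if φ is a ℤ-valued 3-cocycle for A_n satisfying φ(2^n − 1, y, z) = 0 for all y, z in {1, …, 2^n}, then φ(x, y, z) = 0 for all x, y, z in {1, …, 2^n}. -/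
/-- `φ` is a `ℤ`-valued rack 3-cocycle for the Laver table `A_n` with operation `op`. -/
def Is3Cocycle (n : ℕ) (op : ℕ → ℕ → ℕ) (φ : ℕ → ℕ → ℕ → ℤ) : Prop :=
  ∀ x y z t, 1 ≤ x → x ≤ 2 ^ n → 1 ≤ y → y ≤ 2 ^ n → 1 ≤ z → z ≤ 2 ^ n →
    1 ≤ t → t ≤ 2 ^ n →
    φ (op x y) (op x z) (op x t) + φ x y (op z t) + φ x z t =
      φ x (op y z) (op y t) + φ y z t + φ x y t

/-- The top row of a Laver table is the identity: `2^n * y = y`. -/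
lemma laver_top_row (n : ℕ) (op : ℕ → ℕ → ℕ) (h : IsLaverOp n op) :
    ∀ y, 1 ≤ y → y ≤ 2 ^ n → op (2 ^ n) y = y := by
  obtain ⟨hcl, hsucc, htop, hsd⟩ := h
  have hN : 1 ≤ 2 ^ n := Nat.one_le_two_pow
  intro y hy
  induction y, hy using Nat.le_induction with
  | base => intro _; exact htop
  | succ y hy ih =>
    intro hle
    have hylt : y < 2 ^ n := by omega
    have hyle : y ≤ 2 ^ n := le_of_lt hylt
    have h1 : op y 1 = y + 1 := hsucc y hy hylt
    calc op (2 ^ n) (y + 1) = op (2 ^ n) (op y 1) := by rw [h1]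
      _ = op (op (2 ^ n) y) (op (2 ^ n) 1) := hsd _ _ hN le_rfl hy hyle
      _ = op y 1 := by rw [ih hyle, htop]
      _ = y + 1 := h1

/-- The next-to-top row of a Laver table is constant: `(2^n − 1) * y = 2^n`. -/
lemma laver_penultimate_row (n : ℕ) (hn : 1 ≤ n) (op : ℕ → ℕ → ℕ) (h : IsLaverOp n op) :
    ∀ y, 1 ≤ y → y ≤ 2 ^ n → op (2 ^ n - 1) y = 2 ^ n := by
  have htoprow := laver_top_row n op h
  obtain ⟨hcl, hsucc, htop, hsd⟩ := h
  have hN2 : 2 ≤ 2 ^ n := by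
    calc 2 = 2 ^ 1 := rfl
    _ ≤ 2 ^ n := Nat.pow_le_pow_right (by norm_num) hn
  have hm1 : 1 ≤ 2 ^ n - 1 := by omega
  have hm2 : 2 ^ n - 1 < 2 ^ n := by omega
  have hbase : op (2 ^ n - 1) 1 = 2 ^ n := by
    rw [hsucc _ hm1 hm2]; omega
  intro y hy
  induction y, hy using Nat.le_induction with
  | base => intro _; exact hbase
  | succ y hy ih =>
    intro hle
    have hylt : y < 2 ^ n := by omega
    have hyle : y ≤ 2 ^ n := le_of_lt hylt
    have h1 : op y 1 = y + 1 := hsucc y hy hylt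
    calc op (2 ^ n - 1) (y + 1) = op (2 ^ n - 1) (op y 1) := by rw [h1]
      _ = op (op (2 ^ n - 1) y) (op (2 ^ n - 1) 1) := hsd _ _ hm1 (le_of_lt hm2) hy hyle
      _ = op (2 ^ n) (2 ^ n) := by rw [ih hyle, hbase]
      _ = 2 ^ n := htoprow _ (by omega) le_rfl

/-- A 3-cocycle for `A_n` that vanishes on all triples starting with `2^n − 1`
is the zero cocycle. -/
theorem laver_three_cocycle_vanishing (n : ℕ) (hn : 1 ≤ n)
    (op : ℕ → ℕ → ℕ) (h : IsLaverOp n op)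
    (φ : ℕ → ℕ → ℕ → ℤ) (hφ : Is3Cocycle n op φ)
    (hrow : ∀ y z, 1 ≤ y → y ≤ 2 ^ n → 1 ≤ z → z ≤ 2 ^ n → φ (2 ^ n - 1) y z = 0) :
    ∀ x y z, 1 ≤ x → x ≤ 2 ^ n → 1 ≤ y → y ≤ 2 ^ n → 1 ≤ z → z ≤ 2 ^ n →
      φ x y z = 0 := by
  have hpen := laver_penultimate_row n hn op h
  obtain ⟨hcl, hsucc, htop, hsd⟩ := h
  have hN2 : 2 ≤ 2 ^ n := by
    calc 2 = 2 ^ 1 := rfl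
    _ ≤ 2 ^ n := Nat.pow_le_pow_right (by norm_num) hn
  have hm1 : 1 ≤ 2 ^ n - 1 := by omega
  have hm2 : 2 ^ n - 1 ≤ 2 ^ n := by omega
  have hN1 : 1 ≤ 2 ^ n := by omega
  -- key: for any triple in range, φ y z t = φ (2^n) (2^n) (2^n)
  have key : ∀ y z t, 1 ≤ y → y ≤ 2 ^ n → 1 ≤ z → z ≤ 2 ^ n → 1 ≤ t → t ≤ 2 ^ n →
      φ y z t = φ (2 ^ n) (2 ^ n) (2 ^ n) := by
    intro y z t h1 h2 h3 h4 h5 h6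
    have hc := hφ (2 ^ n - 1) y z t hm1 hm2 h1 h2 h3 h4 h5 h6
    obtain ⟨hzt1, hzt2⟩ := hcl z t h3 h4 h5 h6
    obtain ⟨hyz1, hyz2⟩ := hcl y z h1 h2 h3 h4
    obtain ⟨hyt1, hyt2⟩ := hcl y t h1 h2 h5 h6
    rw [hpen y h1 h2, hpen z h3 h4, hpen t h5 h6,
      hrow y (op z t) h1 h2 hzt1 hzt2, hrow z t h3 h4 h5 h6,
      hrow (op y z) (op y t) hyz1 hyz2 hyt1 hyt2, hrow y t h1 h2 h5 h6] at hc
    linarith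
  have hzero : φ (2 ^ n) (2 ^ n) (2 ^ n) = 0 := by
    rw [← key (2 ^ n - 1) (2 ^ n - 1) (2 ^ n - 1) hm1 hm2 hm1 hm2 hm1 hm2]
    exact hrow _ _ hm1 hm2 hm1 hm2
  intro x y z h1 h2 h3 h4 h5 h6
  rw [key x y z h1 h2 h3 h4 h5 h6, hzero]
end
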